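/- Let n ≥ 2. The n−1 functions A ↦ tr(A²), A ↦ tr(A³), …, A ↦ tr(Aⁿ), viewed as elements of the ℝ-algebra of real-valued functions on the space {A ∈ M_n(ℝ) : tr A = 0} of trace-zero real n×n matrices, are algebraically independent over ℝ; that is, there is no nonzero polynomial F ∈ ℝ[y_2,…,y_n] with F(tr(A²),…,tr(Aⁿ)) = 0 for all trace-zero real n×n matrices A. -/

import Mathlib

open MvPolynomial Matrix

/-- A surjective ring endomorphism of a Noetherian (commutative) ring is injective. -/
lemma surj_endo_inj {R : Type*} [CommRing R] [IsNoetherianRing R] (f : R →+* R)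
    (hf : Function.Surjective f) : Function.Injective (⇑f) := by
  have hpow : ∀ k : ℕ, Function.Surjective (⇑(f ^ k)) := by
    intro k
    induction k with
    | zero => simpa using Function.surjective_id
    | succ k ih =>
      rw [pow_succ]
      intro z
      obtain ⟨y, hy⟩ := ih z
      obtain ⟨x, hx⟩ := hf y
      refine ⟨x, ?_⟩
      have : (f ^ k * f) x = (f ^ k) (f x) := rfl
      rw [this, hx, hy]
  have hmono : Monotone (fun k : ℕ => RingHom.ker (f ^ k)) := by
    intro k l hkl
    intro x hx
    have : f ^ l = f ^ (l - k) * f ^ k := by rw [← pow_add]; congr 1; omega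
    simp only [RingHom.mem_ker] at hx ⊢
    rw [this, RingHom.mul_def, RingHom.comp_apply, hx, map_zero]
  obtain ⟨N, hN⟩ := monotone_stabilizes_iff_noetherian.mpr inferInstance
    ⟨fun k : ℕ => RingHom.ker (f ^ k), hmono⟩
  rw [injective_iff_map_eq_zero]
  intro x hx
  obtain ⟨y, rfl⟩ := hpow N x
  have hy : y ∈ RingHom.ker (f ^ (N + 1)) := by
    simp only [RingHom.mem_ker, pow_succ', RingHom.mul_def, RingHom.comp_apply]
    exact hx
  have h2 : RingHom.ker (f ^ N) = RingHom.ker (f ^ (N + 1)) := hN (N + 1) (Nat.le_succ N)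
  rw [← h2] at hy
  simpa [RingHom.mem_ker] using hy

noncomputable section PsumIndep

variable (n : ℕ)

/-- The family of power sums `p₁, …, pₙ` in `n` variables. -/
def Pfam : Fin n → MvPolynomial (Fin n) ℝ := fun i => psum (Fin n) ℝ ((i : ℕ) + 1)

/-- The family of elementary symmetric polynomials `e₁, …, eₙ` in `n` variables. -/
def Efam : Fin n → MvPolynomial (Fin n) ℝ := fun i => esymm (Fin n) ℝ ((i : ℕ) + 1)

lemma Phie_eq (p : MvPolynomial (Fin n) ℝ) :
    aeval (Efam n) p = (esymmAlgHom (Fin n) ℝ n p : MvPolynomial (Fin n) ℝ) :=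
  (esymmAlgHom_apply _).symm

lemma Phie_injective : Function.Injective (aeval (Efam n) :
    MvPolynomial (Fin n) ℝ → MvPolynomial (Fin n) ℝ) := by
  intro p q h
  rw [Phie_eq, Phie_eq] at h
  exact esymmAlgHom_injective ℝ (by simp) (Subtype.ext h)

lemma mem_range_Phie_iff (p : MvPolynomial (Fin n) ℝ) :
    p ∈ (aeval (Efam n) : MvPolynomial (Fin n) ℝ →ₐ[ℝ] MvPolynomial (Fin n) ℝ).range ↔
      p.IsSymmetric := by
  rw [AlgHom.mem_range]
  constructor
  · rintro ⟨q, rfl⟩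
    rw [Phie_eq]
    exact (esymmAlgHom (Fin n) ℝ n q).2
  · intro hp
    obtain ⟨q, hq⟩ := esymmAlgHom_surjective (n := n) ℝ (by simp)
      ⟨p, (mem_symmetricSubalgebra p).mpr hp⟩
    exact ⟨q, by rw [Phie_eq, hq]⟩

lemma psum_mem_range_Phip {k : ℕ} (h1 : 1 ≤ k) (h2 : k ≤ n) :
    psum (Fin n) ℝ k ∈ (aeval (Pfam n) :
      MvPolynomial (Fin n) ℝ →ₐ[ℝ] MvPolynomial (Fin n) ℝ).range := by
  rw [AlgHom.mem_range]
  refine ⟨X ⟨k - 1, by omega⟩, ?_⟩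
  rw [aeval_X]
  simp only [Pfam]
  congr 1
  omega

lemma esymm_mem_range_Phip : ∀ k : ℕ, k ≤ n →
    esymm (Fin n) ℝ k ∈ (aeval (Pfam n) :
      MvPolynomial (Fin n) ℝ →ₐ[ℝ] MvPolynomial (Fin n) ℝ).range := by
  intro k
  induction k using Nat.strong_induction_on with
  | _ k ih =>
    intro hk
    rcases Nat.eq_zero_or_pos k with rfl | hk0
    · rw [esymm_zero]
      exact one_mem _
    have key := mul_esymm_eq_sum (Fin n) ℝ k
    have hC : (C ((k : ℝ)⁻¹) : MvPolynomial (Fin n) ℝ) * (k : MvPolynomial (Fin n) ℝ) = 1 := by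
      rw [← map_natCast (C : ℝ →+* MvPolynomial (Fin n) ℝ) k, ← C_mul,
        inv_mul_cancel₀ (by exact_mod_cast hk0.ne'), C_1]
    have hek : esymm (Fin n) ℝ k =
        C ((k : ℝ)⁻¹) * ((k : MvPolynomial (Fin n) ℝ) * esymm (Fin n) ℝ k) := by
      rw [← mul_assoc, hC, one_mul]
    rw [hek, key]
    refine mul_mem (by
      rw [← algebraMap_eq]; exact Subalgebra.algebraMap_mem _ _) ?_
    refine mul_mem (pow_mem (neg_mem (one_mem _)) _) ?_
    refine sum_mem fun a ha => ?_
    simp only [Finset.mem_filter, Finset.HasAntidiagonal.mem_antidiagonal] at ha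
    refine mul_mem (mul_mem (pow_mem (neg_mem (one_mem _)) _) ?_) ?_
    · exact ih a.1 ha.2 (by omega)
    · exact psum_mem_range_Phip n (by omega) (by omega)

lemma range_Phie_le_range_Phip :
    (aeval (Efam n) : MvPolynomial (Fin n) ℝ →ₐ[ℝ] MvPolynomial (Fin n) ℝ).range ≤
    (aeval (Pfam n) : MvPolynomial (Fin n) ℝ →ₐ[ℝ] MvPolynomial (Fin n) ℝ).range := by
  rw [← Algebra.adjoin_range_eq_range_aeval]
  refine Algebra.adjoin_le ?_
  rintro _ ⟨i, rfl⟩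
  exact esymm_mem_range_Phip n ((i : ℕ) + 1) (by omega)

lemma Phip_injective : Function.Injective (aeval (Pfam n) :
    MvPolynomial (Fin n) ℝ → MvPolynomial (Fin n) ℝ) := by
  -- choose a preimage under Φe for each power sum
  have hmem : ∀ i : Fin n, ∃ q : MvPolynomial (Fin n) ℝ, aeval (Efam n) q = Pfam n i := by
    intro i
    exact (AlgHom.mem_range _).mp ((mem_range_Phie_iff n _).mpr (psum_isSymmetric _ _ _))
  choose g hg using hmem
  have hcomp : ∀ q : MvPolynomial (Fin n) ℝ,
      aeval (Efam n) (aeval g q) = aeval (Pfam n) q := by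
    intro q
    rw [comp_aeval_apply]
    have : (fun i => aeval (Efam n) (g i)) = Pfam n := funext hg
    rw [this]
  have husurj : Function.Surjective (aeval g :
      MvPolynomial (Fin n) ℝ → MvPolynomial (Fin n) ℝ) := by
    intro z
    have : aeval (Efam n) z ∈ (aeval (Pfam n) :
        MvPolynomial (Fin n) ℝ →ₐ[ℝ] MvPolynomial (Fin n) ℝ).range :=
      range_Phie_le_range_Phip n ((AlgHom.mem_range _).mpr ⟨z, rfl⟩)
    obtain ⟨w, hw⟩ := (AlgHom.mem_range _).mp this
    exact ⟨w, Phie_injective n (by rw [hcomp w, hw])⟩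
  have huinj : Function.Injective (aeval g :
      MvPolynomial (Fin n) ℝ → MvPolynomial (Fin n) ℝ) :=
    surj_endo_inj (aeval g : MvPolynomial (Fin n) ℝ →ₐ[ℝ] MvPolynomial (Fin n) ℝ).toRingHom husurj
  intro p q h
  apply huinj
  apply Phie_injective n
  rw [hcomp, hcomp, h]

lemma symmetric_mem_range_Phip {p : MvPolynomial (Fin n) ℝ} (hp : p.IsSymmetric) :
    p ∈ (aeval (Pfam n) : MvPolynomial (Fin n) ℝ →ₐ[ℝ] MvPolynomial (Fin n) ℝ).range :=
  range_Phie_le_range_Phip n ((mem_range_Phie_iff n p).mpr hp)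

end PsumIndep

/-- If a polynomial vanishes under the substitution `xₘ ↦ -(x₀ + ⋯ + x_{m-1})`,
then it is divisible by `x₀ + ⋯ + xₘ`. -/
lemma e1_dvd_of_subst_eq_zero (m : ℕ) (P : MvPolynomial (Fin (m + 1)) ℝ)
    (h : aeval (Fin.snoc X (-(∑ i : Fin m, X i)) : Fin (m + 1) → MvPolynomial (Fin m) ℝ) P = 0) :
    (∑ i : Fin (m + 1), X i) ∣ P := by
  set ψ : MvPolynomial (Fin (m + 1)) ℝ →ₐ[ℝ] MvPolynomial (Fin m) ℝ :=
    aeval (Fin.snoc X (-(∑ i : Fin m, X i))) with hψ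
  have main : ∀ p : MvPolynomial (Fin (m + 1)) ℝ,
      (∑ i : Fin (m + 1), X i) ∣ p - rename Fin.castSucc (ψ p) := by
    intro p
    induction p using MvPolynomial.induction_on with
    | C a => simp [ψ]
    | add p q hp hq =>
      have heq : p + q - rename Fin.castSucc (ψ (p + q)) =
          (p - rename Fin.castSucc (ψ p)) + (q - rename Fin.castSucc (ψ q)) := by
        rw [map_add, map_add]; ring
      rw [heq]
      exact dvd_add hp hq
    | mul_X p i hp =>
      have hX : (∑ i : Fin (m + 1), X i) ∣ (X i - rename Fin.castSucc (ψ (X i))) := by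
        induction i using Fin.lastCases with
        | last =>
          have : X (Fin.last m) - rename Fin.castSucc (ψ (X (Fin.last m))) =
              ∑ i : Fin (m + 1), X i := by
            rw [hψ, aeval_X, Fin.snoc_last, map_neg, map_sum, Fin.sum_univ_castSucc]
            simp only [rename_X]
            ring
          rw [this]
        | cast j =>
          have : X (Fin.castSucc j) - rename Fin.castSucc (ψ (X (Fin.castSucc j))) = 0 := by
            rw [hψ, aeval_X, Fin.snoc_castSucc, rename_X, sub_self]
          rw [this]
          exact dvd_zero _
      have heq : p * X i - rename Fin.castSucc (ψ (p * X i)) =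
          (p - rename Fin.castSucc (ψ p)) * X i +
            rename Fin.castSucc (ψ p) * (X i - rename Fin.castSucc (ψ (X i))) := by
        rw [_root_.map_mul, _root_.map_mul]; ring
      rw [heq]
      exact dvd_add (hp.mul_right _) (hX.mul_left _)
  have := main P
  rw [h, map_zero, sub_zero] at this
  exact this

lemma aeval_eq_eval' {σ : Type*} (x : σ → ℝ) (p : MvPolynomial σ ℝ) :
    aeval x p = eval x p := by
  have h := coe_aeval_eq_eval (f := x)
  exact DFunLike.congr_fun h p

lemma eval_aeval' {σ τ : Type*} (x : τ → ℝ) (f : σ → MvPolynomial τ ℝ) (p : MvPolynomial σ ℝ) :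
    eval x (aeval f p) = eval (fun i => eval x (f i)) p := by
  calc eval x (aeval f p) = aeval x (aeval f p) := (aeval_eq_eval' _ _).symm
    _ = aeval (fun i => aeval x (f i)) p := by rw [comp_aeval_apply]
    _ = eval (fun i => eval x (f i)) p := by
        rw [show (fun i => aeval x (f i)) = fun i => eval x (f i) from
          funext fun i => aeval_eq_eval' _ _, aeval_eq_eval']

/-- The algebraic independence part of Theorem 6.1: the functions
`A ↦ tr(A²), …, A ↦ tr(Aⁿ)` on trace-zero real `n × n` matrices are algebraically
independent over `ℝ`: no nonzero polynomial `F ∈ ℝ[y₂,…,yₙ]` satisfies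
`F(tr(A²),…,tr(Aⁿ)) = 0` for all trace-zero `A`. -/
theorem traces_algebraically_independent
    (n : ℕ) (hn : 2 ≤ n) (F : MvPolynomial {i : ℕ // 2 ≤ i ∧ i ≤ n} ℝ)
    (hF : ∀ A : Matrix (Fin n) (Fin n) ℝ, A.trace = 0 →
      eval (fun i : {i : ℕ // 2 ≤ i ∧ i ≤ n} => (A ^ (i : ℕ)).trace) F = 0) :
    F = 0 := by
  obtain ⟨m, rfl⟩ : ∃ m, n = m + 1 := ⟨n - 1, by omega⟩
  -- embed the index set `{2,…,m+1}` into `Fin (m+1)` via `i ↦ i - 1`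
  set emb : {i : ℕ // 2 ≤ i ∧ i ≤ m + 1} → Fin (m + 1) :=
    fun i => ⟨(i : ℕ) - 1, by omega⟩ with hemb
  have hembinj : Function.Injective emb := by
    intro i j hij
    have := congrArg Fin.val hij
    simp only [hemb] at this
    exact Subtype.ext (by omega)
  set G' : MvPolynomial (Fin (m + 1)) ℝ := rename emb F with hG'
  set P : MvPolynomial (Fin (m + 1)) ℝ := aeval (Pfam (m + 1)) G' with hPdef
  have hP : P = aeval (fun i : {i : ℕ // 2 ≤ i ∧ i ≤ m + 1} =>
      psum (Fin (m + 1)) ℝ (i : ℕ)) F := by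
    rw [hPdef, hG', aeval_rename]
    have hfe : Pfam (m + 1) ∘ emb = fun i : {i : ℕ // 2 ≤ i ∧ i ≤ m + 1} =>
        psum (Fin (m + 1)) ℝ (i : ℕ) := by
      funext i
      have hi := i.2
      simp only [Function.comp_apply, Pfam, hemb]
      congr 1
      omega
    rw [hfe]
  -- P vanishes on the hyperplane Σ x = 0
  have heval : ∀ x : Fin (m + 1) → ℝ, (∑ i, x i) = 0 → eval x P = 0 := by
    intro x hx
    have hA := hF (diagonal x) (by rw [trace_diagonal]; exact hx)
    rw [hP, eval_aeval']
    have hfun : (fun i : {i : ℕ // 2 ≤ i ∧ i ≤ m + 1} =>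
        eval x (psum (Fin (m + 1)) ℝ (i : ℕ))) =
        fun i : {i : ℕ // 2 ≤ i ∧ i ≤ m + 1} => (diagonal x ^ (i : ℕ)).trace := by
      funext i
      rw [diagonal_pow, trace_diagonal]
      simp [psum]
    rw [hfun]
    exact hA
  -- therefore the substitution xₘ ↦ -(x₀+⋯) kills P
  have hψP : aeval (Fin.snoc X (-(∑ i : Fin m, X i)) :
      Fin (m + 1) → MvPolynomial (Fin m) ℝ) P = 0 := by
    apply MvPolynomial.funext
    intro y
    rw [map_zero, eval_aeval']
    have hfun : (fun i : Fin (m + 1) =>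
        eval y ((Fin.snoc X (-(∑ i : Fin m, X i)) : Fin (m + 1) → MvPolynomial (Fin m) ℝ) i)) =
        Fin.snoc y (-(∑ j, y j)) := by
      funext i
      induction i using Fin.lastCases with
      | last => simp
      | cast j => simp
    rw [hfun]
    apply heval
    rw [Fin.sum_univ_castSucc]
    simp
  obtain ⟨h, hh⟩ := e1_dvd_of_subst_eq_zero m P hψP
  -- P is symmetric, hence so is the cofactor h
  have hsymP : MvPolynomial.IsSymmetric P := by
    intro r
    show rename r P = P
    rw [hPdef, comp_aeval_apply]
    have hfe : (fun i => rename (⇑r) (Pfam (m + 1) i)) = Pfam (m + 1) := by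
      funext i
      exact psum_isSymmetric _ _ _ r
    rw [hfe]
  have he1symm : ∀ r : Equiv.Perm (Fin (m + 1)),
      rename (⇑r) (∑ i : Fin (m + 1), X i : MvPolynomial (Fin (m + 1)) ℝ)
        = ∑ i : Fin (m + 1), X i := by
    intro r
    rw [← psum_one]
    exact psum_isSymmetric _ _ _ r
  have he1ne : (∑ i : Fin (m + 1), X i : MvPolynomial (Fin (m + 1)) ℝ) ≠ 0 := by
    intro h0
    have := congrArg (eval fun _ => (1 : ℝ)) h0
    simp at this
    exact Nat.cast_add_one_ne_zero m this
  have hsymh : MvPolynomial.IsSymmetric h := by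
    intro r
    apply mul_left_cancel₀ he1ne
    calc (∑ i : Fin (m + 1), X i) * rename r h
        = rename r ((∑ i : Fin (m + 1), X i) * h) := by rw [_root_.map_mul, he1symm]
      _ = rename r P := by rw [← hh]
      _ = P := hsymP r
      _ = (∑ i : Fin (m + 1), X i) * h := hh
  obtain ⟨H, hH⟩ := (AlgHom.mem_range _).mp (symmetric_mem_range_Phip (m + 1) hsymh)
  -- conclude G' = X 0 * H, but G' has no X 0
  have hG'eq : G' = X 0 * H := by
    apply Phip_injective (m + 1)
    rw [_root_.map_mul, hH, aeval_X, ← hPdef, hh]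
    congr 1
    simp only [Pfam]
    rw [show ((0 : Fin (m + 1)) : ℕ) + 1 = 1 by simp, psum_one]
  -- kill X 0
  have hkill : aeval (fun j : Fin (m + 1) => if j = 0 then 0 else X j) G' = G' := by
    rw [hG', aeval_rename]
    have : ((fun j : Fin (m + 1) => if j = 0 then (0 : MvPolynomial (Fin (m+1)) ℝ) else X j)
        ∘ emb) = X ∘ emb := by
      funext i
      simp only [Function.comp_apply]
      rw [if_neg]
      intro hc
      have := congrArg Fin.val hc
      simp only [hemb, Fin.val_zero] at this
      omega
    rw [this]
    rw [rename_eq_aeval]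
  have hzero : G' = 0 := by
    rw [hG'eq] at hkill
    rw [_root_.map_mul, aeval_X, if_pos rfl, zero_mul] at hkill
    rw [hG'eq, ← hkill]
  have : rename emb F = rename emb 0 := by rw [map_zero, ← hG', hzero]
  exact rename_injective emb hembinj this
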